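/- Let X be a complete geodesic metric space that is tree-graded with respect to a collection P of pieces. Then every isometrically embedded Riemannian circle (an isometric copy of ℝ/ℓℤ with its quotient geodesic metric, for some ℓ > 0) in X is contained in a single piece. -/
import Mathlib


open Set

/-- `f` is a geodesic from `x` to `y`, parametrized by arc length on
`[0, dist x y]`. -/
def IsGeodesicFrom {X : Type*} [MetricSpace X] (f : ℝ → X) (x y : X) : Prop :=
  f 0 = x ∧ f (dist x y) = y ∧
    ∀ s t : ℝ, s ∈ Icc 0 (dist x y) → t ∈ Icc 0 (dist x y) → dist (f s) (f t) = |s - t|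


lemma addCircle_coe_eq_iff' {ℓ : ℝ} (a b : ℝ) :
    ((a : AddCircle ℓ) = (b : AddCircle ℓ)) ↔ ∃ k : ℤ, a - b = k * ℓ := by
  rw [show ((a : AddCircle ℓ)) = QuotientAddGroup.mk a from rfl,
    show ((b : AddCircle ℓ)) = QuotientAddGroup.mk b from rfl,
    QuotientAddGroup.eq]
  simp_rw [AddSubgroup.mem_zmultiples_iff, zsmul_eq_mul]
  constructor
  · rintro ⟨k, hk⟩; exact ⟨-k, by push_cast; linarith⟩
  · rintro ⟨k, hk⟩; exact ⟨-k, by push_cast; linarith⟩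

lemma addCircle_dist_coe' {ℓ : ℝ} (hℓ : 0 < ℓ) (a b : ℝ) (h : |a - b| ≤ ℓ / 2) :
    dist ((a : AddCircle ℓ)) ((b : AddCircle ℓ)) = |a - b| := by
  rw [dist_eq_norm, ← AddCircle.coe_sub]
  exact (AddCircle.norm_coe_eq_abs_iff (p := ℓ) hℓ.ne').mpr (by rwa [abs_of_pos hℓ])

lemma injOn_of_isGeodesicFrom {X : Type*} [MetricSpace X] {f : ℝ → X} {x y : X}
    (hf : IsGeodesicFrom f x y) : InjOn f (Icc 0 (dist x y)) := by
  intro s hs u hu h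
  have h2 := hf.2.2 s u hs hu
  rw [h, dist_self] at h2
  have h3 := h2.symm
  rwa [abs_eq_zero, sub_eq_zero] at h3

/-- A geodesic metric space: any two points are joined by a geodesic. -/
def GeodesicSpace (X : Type*) [MetricSpace X] : Prop :=
  ∀ x y : X, ∃ f : ℝ → X, IsGeodesicFrom f x y

/-- A subset `A` of a metric space is geodesic if any two of its points are joined by
a geodesic contained in `A`. -/
def IsGeodesicSubset {X : Type*} [MetricSpace X] (A : Set X) : Prop :=
  ∀ x ∈ A, ∀ y ∈ A, ∃ f : ℝ → X, IsGeodesicFrom f x y ∧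
    ∀ s ∈ Icc (0 : ℝ) (dist x y), f s ∈ A

/-- In a complete geodesic metric space `X` that is tree-graded with respect to a
collection `P` of pieces (closed geodesic subsets, any two of which meet in at most a
point, such that every nontrivial simple geodesic triangle lies in a piece), every
isometrically embedded Riemannian circle `ℝ/ℓℤ` (for any `ℓ > 0`) is contained in a
single piece. -/
theorem circle_in_piece_of_tree_graded (X : Type*) [MetricSpace X] [CompleteSpace X]
    (hgeo : GeodesicSpace X) (P : Set (Set X))
    (hclosed : ∀ A ∈ P, IsClosed A)
    (hgeod : ∀ A ∈ P, IsGeodesicSubset A)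
    (hmeet : ∀ A ∈ P, ∀ B ∈ P, A ≠ B → (A ∩ B).Subsingleton)
    (htri : ∀ x y z : X, ∀ f g h : ℝ → X,
      IsGeodesicFrom f x y → IsGeodesicFrom g y z → IsGeodesicFrom h x z →
      x ≠ y → y ≠ z → x ≠ z →
      InjOn f (Icc 0 (dist x y)) → InjOn g (Icc 0 (dist y z)) →
      InjOn h (Icc 0 (dist x z)) →
      f '' Icc 0 (dist x y) ∩ g '' Icc 0 (dist y z) = {y} →
      g '' Icc 0 (dist y z) ∩ h '' Icc 0 (dist x z) = {z} →
      f '' Icc 0 (dist x y) ∩ h '' Icc 0 (dist x z) = {x} →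
      ∃ A ∈ P, f '' Icc 0 (dist x y) ∪ g '' Icc 0 (dist y z) ∪
        h '' Icc 0 (dist x z) ⊆ A)
    (ℓ : ℝ) (hℓ : 0 < ℓ) (e : AddCircle ℓ → X) (he : Isometry e) :
    ∃ A ∈ P, range e ⊆ A := by
  set t : ℝ := ℓ / 3 with ht3
  have ht : 0 < t := by positivity
  have hl3 : ℓ = 3 * t := by rw [ht3]; ring
  have hd : ∀ a b : ℝ, |a - b| ≤ ℓ / 2 → dist (e a) (e b) = |a - b| := fun a b h => by
    rw [he.dist_eq]; exact addCircle_dist_coe' hℓ a b h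
  -- the three vertices
  set x : X := e ((0 : ℝ) : AddCircle ℓ) with hxdef
  set y : X := e ((t : ℝ) : AddCircle ℓ) with hydef
  set z : X := e ((2 * t : ℝ) : AddCircle ℓ) with hzdef
  have hz' : ((2 * t : ℝ) : AddCircle ℓ) = ((-t : ℝ) : AddCircle ℓ) :=
    (addCircle_coe_eq_iff' _ _).mpr ⟨1, by push_cast; linarith⟩
  have dxy : dist x y = t := by
    rw [hxdef, hydef, hd 0 t (by rw [abs_of_nonpos (by linarith)]; linarith),
      abs_of_nonpos (by linarith)]; ring
  have dyz : dist y z = t := by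
    rw [hydef, hzdef, hd t (2 * t) (by rw [abs_of_nonpos (by linarith)]; linarith),
      abs_of_nonpos (by linarith)]; ring
  have dxz : dist x z = t := by
    rw [hxdef, hzdef, hz', hd 0 (-t) (by rw [abs_of_nonneg (by linarith)]; linarith),
      abs_of_nonneg (by linarith)]; ring
  -- the three geodesic sides
  set f : ℝ → X := fun s => e ((s : ℝ) : AddCircle ℓ) with hfdef
  set g : ℝ → X := fun s => e ((t + s : ℝ) : AddCircle ℓ) with hgdef
  set c : ℝ → X := fun s => e ((-s : ℝ) : AddCircle ℓ) with hcdef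
  have hf : IsGeodesicFrom f x y := by
    refine ⟨rfl, by rw [dxy], ?_⟩
    intro s u hs hu
    rw [dxy] at hs hu
    exact hd s u (abs_le.mpr ⟨by linarith [hs.1, hu.2], by linarith [hs.2, hu.1]⟩)
  have hg : IsGeodesicFrom g y z := by
    refine ⟨by show e _ = y; rw [hydef]; norm_num, ?_, ?_⟩
    · rw [dyz]; show e _ = z; rw [hzdef]
      rw [show (t + t : ℝ) = 2 * t by ring]
    · intro s u hs hu
      rw [dyz] at hs hu
      have := hd (t + s) (t + u)
        (by rw [show t + s - (t + u) = s - u by ring];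
            exact abs_le.mpr ⟨by linarith [hs.1, hu.2], by linarith [hs.2, hu.1]⟩)
      rw [show t + s - (t + u) = s - u by ring] at this
      exact this
  have hc : IsGeodesicFrom c x z := by
    refine ⟨by show e _ = x; rw [hxdef]; norm_num, ?_, ?_⟩
    · rw [dxz]; show e _ = z; rw [hzdef, hz']
    · intro s u hs hu
      rw [dxz] at hs hu
      have := hd (-s) (-u)
        (by rw [show -s - -u = -(s - u) by ring, abs_neg];
            exact abs_le.mpr ⟨by linarith [hs.1, hu.2], by linarith [hs.2, hu.1]⟩)
      rw [show -s - -u = -(s - u) by ring, abs_neg] at this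
      exact this
  have hxy : x ≠ y := fun hh => by
    have : dist x y ≠ 0 := by rw [dxy]; linarith
    exact this (by rw [hh, dist_self])
  have hyz : y ≠ z := fun hh => by
    have : dist y z ≠ 0 := by rw [dyz]; linarith
    exact this (by rw [hh, dist_self])
  have hxz : x ≠ z := fun hh => by
    have : dist x z ≠ 0 := by rw [dxz]; linarith
    exact this (by rw [hh, dist_self])
  -- intersections
  have hfg : f '' Icc 0 (dist x y) ∩ g '' Icc 0 (dist y z) = {y} := by
    ext p
    simp only [mem_inter_iff, mem_image, mem_singleton_iff]
    constructor
    · rintro ⟨⟨s, hs, rfl⟩, ⟨u, hu, hgu⟩⟩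
      rw [dxy] at hs; rw [dyz] at hu
      have hcq := he.injective hgu
      obtain ⟨k, hk⟩ := (addCircle_coe_eq_iff' _ _).mp hcq
      have hk0 : k = 0 := by
        have a1 : (k : ℝ) < 1 := by nlinarith [hs.1, hs.2, hu.1, hu.2]
        have a2 : (-1 : ℝ) < k := by nlinarith [hs.1, hs.2, hu.1, hu.2]
        have b1 : k < 1 := by exact_mod_cast a1
        have b2 : -1 < k := by exact_mod_cast a2
        omega
      rw [hk0] at hk
      push_cast at hk
      have hst : s = t := by linarith [hu.1, hs.2]
      rw [hfdef]; show e _ = y; rw [hst, hydef]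
    · rintro rfl
      refine ⟨⟨t, by rw [dxy]; exact ⟨le_of_lt ht, le_refl t⟩, rfl⟩,
        ⟨0, by rw [dyz]; exact ⟨le_refl 0, le_of_lt ht⟩, ?_⟩⟩
      show e _ = y; rw [hydef]; norm_num
  have hgc : g '' Icc 0 (dist y z) ∩ c '' Icc 0 (dist x z) = {z} := by
    ext p
    simp only [mem_inter_iff, mem_image, mem_singleton_iff]
    constructor
    · rintro ⟨⟨s, hs, rfl⟩, ⟨u, hu, hcu⟩⟩
      rw [dyz] at hs; rw [dxz] at hu
      have hcq := he.injective hcu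
      obtain ⟨k, hk⟩ := (addCircle_coe_eq_iff' _ _).mp hcq
      have hk0 : k = -1 := by
        have a1 : (k : ℝ) < 0 := by nlinarith [hs.1, hs.2, hu.1, hu.2]
        have a2 : (-2 : ℝ) < k := by nlinarith [hs.1, hs.2, hu.1, hu.2]
        have b1 : (k : ℝ) < (0 : ℤ) := by exact_mod_cast a1
        have b2 : ((-2 : ℤ) : ℝ) < k := by exact_mod_cast a2
        have b1' : k < 0 := by exact_mod_cast b1
        have b2' : (-2 : ℤ) < k := by exact_mod_cast b2
        omega
      rw [hk0] at hk
      push_cast at hk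
      have hst : s = t := by linarith [hs.2, hu.2]
      rw [hgdef]; show e _ = z; rw [hst, hzdef]
      rw [show (t + t : ℝ) = 2 * t by ring]
    · rintro rfl
      refine ⟨⟨t, by rw [dyz]; exact ⟨le_of_lt ht, le_refl t⟩, ?_⟩,
        ⟨t, by rw [dxz]; exact ⟨le_of_lt ht, le_refl t⟩, ?_⟩⟩
      · show e _ = z; rw [hzdef, show (t + t : ℝ) = 2 * t by ring]
      · show e _ = z; rw [hzdef, hz']
  have hfc : f '' Icc 0 (dist x y) ∩ c '' Icc 0 (dist x z) = {x} := by
    ext p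
    simp only [mem_inter_iff, mem_image, mem_singleton_iff]
    constructor
    · rintro ⟨⟨s, hs, rfl⟩, ⟨u, hu, hcu⟩⟩
      rw [dxy] at hs; rw [dxz] at hu
      have hcq := he.injective hcu
      obtain ⟨k, hk⟩ := (addCircle_coe_eq_iff' _ _).mp hcq
      have hk0 : k = 0 := by
        have a1 : (k : ℝ) < 1 := by nlinarith [hs.1, hs.2, hu.1, hu.2]
        have a2 : (-1 : ℝ) < k := by nlinarith [hs.1, hs.2, hu.1, hu.2]
        have b1 : k < 1 := by exact_mod_cast a1
        have b2 : -1 < k := by exact_mod_cast a2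
        omega
      rw [hk0] at hk
      push_cast at hk
      have hs0 : s = 0 := by linarith [hs.1, hu.1]
      rw [hfdef]; show e _ = x; rw [hs0, hxdef]
    · rintro rfl
      refine ⟨⟨0, by rw [dxy]; exact ⟨le_refl 0, le_of_lt ht⟩, rfl⟩,
        ⟨0, by rw [dxz]; exact ⟨le_refl 0, le_of_lt ht⟩, ?_⟩⟩
      show e _ = x; rw [hxdef]; norm_num
  obtain ⟨A, hA, hsub⟩ := htri x y z f g c hf hg hc hxy hyz hxz
    (injOn_of_isGeodesicFrom hf) (injOn_of_isGeodesicFrom hg) (injOn_of_isGeodesicFrom hc) hfg hgc hfc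
  refine ⟨A, hA, ?_⟩
  rintro _ ⟨q, rfl⟩
  induction q using QuotientAddGroup.induction_on with
  | H r =>
    set r' : ℝ := toIcoMod hℓ (-t) r with hr'def
    have hmem := toIcoMod_mem_Ico hℓ (-t) r
    have hcoe : ((r' : ℝ) : AddCircle ℓ) = ((r : ℝ) : AddCircle ℓ) := by
      refine (addCircle_coe_eq_iff' _ _).mpr ⟨-(toIcoDiv hℓ (-t) r), ?_⟩
      rw [hr'def]
      simp only [toIcoMod, zsmul_eq_mul]
      push_cast
      ring
    have hub : r' < 2 * t := by linarith [hmem.2, hl3]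
    have hlb : -t ≤ r' := hmem.1
    apply hsub
    rcases le_or_gt r' 0 with h0 | h0
    · -- on the arc of c
      refine Or.inr ⟨-r', ?_, ?_⟩
      · rw [dxz]; exact ⟨by linarith, by linarith⟩
      · show e _ = e _
        rw [show (-(-r') : ℝ) = r' by ring, hcoe]
    · rcases le_or_gt r' t with h1 | h1
      · -- on the arc of f
        refine Or.inl (Or.inl ⟨r', ?_, ?_⟩)
        · rw [dxy]; exact ⟨le_of_lt h0, h1⟩
        · show e _ = e _; rw [hcoe]
      · -- on the arc of g
        refine Or.inl (Or.inr ⟨r' - t, ?_, ?_⟩)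
        · rw [dyz]; exact ⟨by linarith, by linarith⟩
        · show e _ = e _
          rw [show (t + (r' - t) : ℝ) = r' by ring, hcoe]
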